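/- The function u is μ-integrable and ∫ u dμ = 0; that is, the solution of the Poisson equation given by u(x) = ∫_0^∞ (∫ f dμ_t^x) dt is centered with respect to the invariant measure μ. -/

import Mathlib

set_option maxHeartbeats 1000000

open MeasureTheory Set

/-- Total variation norm of the difference of two (finite) measures. -/
noncomputable def tvNorm {α : Type*} [MeasurableSpace α] (μ ν : Measure α) : ℝ :=
  (⨆ (E : Set α) (_ : MeasurableSet E), (μ E - ν E)).toReal +
  (⨆ (E : Set α) (_ : MeasurableSet E), (ν E - μ E)).toReal

section Helpers

variable {α : Type*} [MeasurableSpace α]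

lemma rpow_le_one_add_rpow {a : ℝ} (ha : 0 ≤ a) {s r : ℝ} (hs : 0 ≤ s) (hsr : s ≤ r) :
    a ^ s ≤ 1 + a ^ r := by
  rcases le_total a 1 with h | h
  · have h1 := Real.rpow_le_one ha h hs
    have h2 := Real.rpow_nonneg ha r
    linarith
  · have h1 := Real.rpow_le_rpow_of_exponent_le h hsr
    linarith

lemma tvNorm_nonneg (ν ν' : Measure α) : 0 ≤ tvNorm ν ν' :=
  add_nonneg ENNReal.toReal_nonneg ENNReal.toReal_nonneg

lemma tvSup_le_one (ν ν' : Measure α) [IsProbabilityMeasure ν] :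
    (⨆ (E : Set α) (_ : MeasurableSet E), (ν E - ν' E)) ≤ 1 := by
  refine iSup₂_le fun E _ => ?_
  exact le_trans tsub_le_self prob_le_one

/-- Layercake one-sided bound. -/
lemma integral_sub_le_of_nonneg (ν ν' : Measure α) [IsProbabilityMeasure ν]
    [IsProbabilityMeasure ν'] {h : α → ℝ} (hm : Measurable h) {M : ℝ} (hM : 0 ≤ M)
    (h0 : ∀ y, 0 ≤ h y) (hb : ∀ y, h y ≤ M) :
    ∫ y, h y ∂ν - ∫ y, h y ∂ν' ≤
      M * ((⨆ (E : Set α) (_ : MeasurableSet E), (ν E - ν' E)).toReal) := by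
  set S := (⨆ (E : Set α) (_ : MeasurableSet E), (ν E - ν' E)) with hS
  have hS1 : S ≤ 1 := tvSup_le_one ν ν'
  have hSfin : S ≠ ⊤ := (lt_of_le_of_lt hS1 (by norm_num)).ne
  have hint : ∀ (ρ : Measure α) [IsProbabilityMeasure ρ], Integrable h ρ := by
    intro ρ _
    refine Integrable.mono' (integrable_const M) hm.aestronglyMeasurable ?_
    filter_upwards with y
    rw [Real.norm_eq_abs, abs_of_nonneg (h0 y)]; exact hb y
  have key1 := (hint ν).integral_eq_integral_meas_lt (Filter.Eventually.of_forall h0)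
  have key2 := (hint ν').integral_eq_integral_meas_lt (Filter.Eventually.of_forall h0)
  simp only [measureReal_def] at key1 key2
  set φ := fun t : ℝ => (ν {a | t < h a}).toReal with hφ
  set ψ := fun t : ℝ => (ν' {a | t < h a}).toReal with hψ
  have hmeasφ : ∀ (ρ : Measure α), Measurable fun t : ℝ => (ρ {a | t < h a}).toReal := by
    intro ρ
    refine Measurable.ennreal_toReal (Antitone.measurable ?_)
    exact fun s t hst => measure_mono (fun a ha => lt_of_le_of_lt hst ha)
  set bnd := fun t : ℝ => (Ioc (0:ℝ) M).indicator (fun _ => (1:ℝ)) t with hbnd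
  have hbnd_int : Integrable bnd (volume.restrict (Ioi (0:ℝ))) := by
    refine Integrable.restrict ?_
    rw [hbnd, integrable_indicator_iff measurableSet_Ioc]
    exact integrableOn_const measure_Ioc_lt_top.ne
  have hsetmeas : ∀ t : ℝ, MeasurableSet {a | t < h a} := by
    intro t
    exact measurableSet_lt measurable_const hm
  have hφle : ∀ (ρ : Measure α) [IsProbabilityMeasure ρ], ∀ t ∈ Ioi (0:ℝ),
      (ρ {a | t < h a}).toReal ≤ bnd t := by
    intro ρ _ t ht
    rcases le_or_gt t M with h' | h'
    · have hb1 : bnd t = 1 := by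
        rw [hbnd]; simp [indicator, mem_Ioi.mp ht, h']
      rw [hb1]
      exact ENNReal.toReal_le_of_le_ofReal zero_le_one (by simpa using prob_le_one)
    · have hempty : {a | t < h a} = ∅ := by
        ext a; simp only [mem_setOf_eq, mem_empty_iff_false, iff_false, not_lt]
        exact (hb a).trans h'.le
      have : (ρ {a | t < h a}).toReal = 0 := by simp [hempty]
      rw [this]
      exact indicator_nonneg (fun _ _ => zero_le_one) t
  have hintφ : ∀ (ρ : Measure α) [IsProbabilityMeasure ρ],
      IntegrableOn (fun t : ℝ => (ρ {a | t < h a}).toReal) (Ioi (0:ℝ)) := by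
    intro ρ _
    refine Integrable.mono' hbnd_int (hmeasφ ρ).aestronglyMeasurable ?_
    filter_upwards [ae_restrict_mem measurableSet_Ioi] with t ht
    rw [Real.norm_eq_abs, abs_of_nonneg ENNReal.toReal_nonneg]
    exact hφle ρ t ht
  -- pointwise ineq on Ioi 0 : φ t ≤ ψ t + S.toReal * bnd t
  have hptwise : ∀ t ∈ Ioi (0:ℝ), φ t ≤ ψ t + S.toReal * bnd t := by
    intro t ht
    rcases le_or_gt t M with h' | h'
    · have hb1 : bnd t = 1 := by
        rw [hbnd]; simp [indicator, mem_Ioi.mp ht, h']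
      rw [hb1, mul_one]
      have hle : ν {a | t < h a} ≤ ν' {a | t < h a} + S := by
        rw [← tsub_le_iff_left]
        refine le_trans ?_ (le_iSup₂ (f := fun E (_ : MeasurableSet E) => ν E - ν' E)
          {a | t < h a} (hsetmeas t))
        exact le_rfl
      have hfin1 : ν' {a | t < h a} + S ≠ ⊤ :=
        ENNReal.add_ne_top.mpr ⟨measure_ne_top _ _, hSfin⟩
      calc φ t ≤ ((ν' {a | t < h a}) + S).toReal := ENNReal.toReal_mono hfin1 hle
        _ = ψ t + S.toReal := ENNReal.toReal_add (measure_ne_top _ _) hSfin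
    · have hempty : {a | t < h a} = ∅ := by
        ext a; simp only [mem_setOf_eq, mem_empty_iff_false, iff_false, not_lt]
        exact (hb a).trans h'.le
      have h2 : φ t = 0 := by rw [hφ]; simp [hempty]
      rw [h2]
      have : 0 ≤ ψ t := ENNReal.toReal_nonneg
      have : 0 ≤ S.toReal * bnd t :=
        mul_nonneg ENNReal.toReal_nonneg (indicator_nonneg (fun _ _ => zero_le_one) t)
      linarith
  have hle2 : ∫ t in Ioi (0:ℝ), φ t ≤ ∫ t in Ioi (0:ℝ), (ψ t + S.toReal * bnd t) := by
    refine setIntegral_mono_on (hintφ ν) ((hintφ ν').add (hbnd_int.const_mul _))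
      measurableSet_Ioi hptwise
  have hbndval : ∫ t in Ioi (0:ℝ), bnd t = M := by
    rw [hbnd, integral_indicator measurableSet_Ioc]
    rw [Measure.restrict_restrict measurableSet_Ioc]
    have hss : Ioc (0:ℝ) M ∩ Ioi 0 = Ioc 0 M := by
      ext t
      constructor
      · rintro ⟨h1, _⟩; exact h1
      · intro h1; exact ⟨h1, h1.1⟩
    rw [hss]
    simp [Real.volume_Ioc, ENNReal.toReal_ofReal hM, hM]
  rw [key1, key2]
  have := integral_add (μ := volume.restrict (Ioi (0:ℝ))) (hintφ ν') (hbnd_int.const_mul S.toReal)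
  rw [this] at hle2
  rw [integral_const_mul, hbndval] at hle2
  have := ENNReal.toReal_nonneg (a := S)
  nlinarith [hle2]

end Helpers

section H2
variable {α : Type*} [MeasurableSpace α]

lemma abs_integral_sub_le_tvNorm (ν ν' : Measure α) [IsProbabilityMeasure ν]
    [IsProbabilityMeasure ν'] {g : α → ℝ} (hm : Measurable g) {M : ℝ}
    (hb : ∀ y, |g y| ≤ M) : |∫ y, g y ∂ν - ∫ y, g y ∂ν'| ≤ M * tvNorm ν ν' := by
  have hne : Nonempty α := by
    refine (fun ⟨x, _⟩ => ⟨x⟩ : (∃ _ : α, True) → Nonempty α) ?_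
    obtain ⟨a, ha⟩ := nonempty_of_measure_ne_zero
      (s := (univ : Set α)) (μ := ν) (by simp)
    exact ⟨a, trivial⟩
  have hM : 0 ≤ M := le_trans (abs_nonneg _) (hb (Classical.arbitrary α))
  set gp := fun y => max (g y) 0 with hgp
  set gn := fun y => max (-(g y)) 0 with hgn
  have hmp : Measurable gp := hm.max measurable_const
  have hmn : Measurable gn := hm.neg.max measurable_const
  have h0p : ∀ y, 0 ≤ gp y := fun y => le_max_right _ _
  have h0n : ∀ y, 0 ≤ gn y := fun y => le_max_right _ _
  have hbp : ∀ y, gp y ≤ M := fun y =>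
    max_le (le_trans (le_abs_self _) (hb y)) hM
  have hbn : ∀ y, gn y ≤ M := fun y =>
    max_le (le_trans (neg_le_abs _) (hb y)) hM
  have hsplit : ∀ y, g y = gp y - gn y := fun y => (max_zero_sub_max_neg_zero_eq_self (g y)).symm
  have hintg : ∀ (ρ : Measure α) [IsProbabilityMeasure ρ] (k : α → ℝ), Measurable k →
      (∀ y, |k y| ≤ M) → Integrable k ρ := by
    intro ρ _ k hk hbk
    refine Integrable.mono' (integrable_const M) hk.aestronglyMeasurable ?_
    filter_upwards with y; exact hbk y
  have habs : ∀ (k : α → ℝ), (∀ y, 0 ≤ k y) → (∀ y, k y ≤ M) → (∀ y, |k y| ≤ M) :=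
    fun k h1 h2 y => by rw [abs_of_nonneg (h1 y)]; exact h2 y
  have hip : ∀ (ρ : Measure α) [IsProbabilityMeasure ρ],
      ∫ y, g y ∂ρ = ∫ y, gp y ∂ρ - ∫ y, gn y ∂ρ := by
    intro ρ _
    rw [← integral_sub (hintg ρ gp hmp (habs gp h0p hbp)) (hintg ρ gn hmn (habs gn h0n hbn))]
    exact integral_congr_ae (Filter.Eventually.of_forall hsplit)
  set S1 := (⨆ (E : Set α) (_ : MeasurableSet E), (ν E - ν' E)).toReal with hS1
  set S2 := (⨆ (E : Set α) (_ : MeasurableSet E), (ν' E - ν E)).toReal with hS2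
  have e1 := integral_sub_le_of_nonneg ν ν' hmp hM h0p hbp
  have e2 := integral_sub_le_of_nonneg ν ν' hmn hM h0n hbn
  have e3 := integral_sub_le_of_nonneg ν' ν hmp hM h0p hbp
  have e4 := integral_sub_le_of_nonneg ν' ν hmn hM h0n hbn
  have htv : tvNorm ν ν' = S1 + S2 := rfl
  rw [hip ν, hip ν', abs_le, htv]
  constructor
  · nlinarith [e2, e3]
  · nlinarith [e1, e4]

lemma integrable_of_abs_le (ν : Measure α) {g : α → ℝ} (hg : Measurable g)
    {G : α → ℝ} (hG : Measurable G) (hGnn : ∀ y, 0 ≤ G y) (hb : ∀ y, |g y| ≤ G y)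
    (hfin : ∫⁻ y, ENNReal.ofReal (G y) ∂ν ≠ ⊤) :
    Integrable g ν ∧ |∫ y, g y ∂ν| ≤ (∫⁻ y, ENNReal.ofReal (G y) ∂ν).toReal := by
  have hGint : Integrable G ν := by
    have := integrable_toReal_of_lintegral_ne_top (hG.ennreal_ofReal).aemeasurable hfin
    refine this.congr (Filter.Eventually.of_forall fun y => ?_)
    exact ENNReal.toReal_ofReal (hGnn y)
  have hgint : Integrable g ν := by
    refine Integrable.mono' hGint hg.aestronglyMeasurable ?_
    filter_upwards with y; exact hb y
  refine ⟨hgint, ?_⟩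
  have h1 : |∫ y, g y ∂ν| ≤ ∫ y, |g y| ∂ν := by
    simpa [Real.norm_eq_abs] using norm_integral_le_integral_norm (μ := ν) g
  have h2 : ∫ y, |g y| ∂ν ≤ ∫ y, G y ∂ν :=
    integral_mono hgint.abs hGint hb
  have h3 : ∫ y, G y ∂ν = (∫⁻ y, ENNReal.ofReal (G y) ∂ν).toReal :=
    integral_eq_lintegral_of_nonneg_ae (Filter.Eventually.of_forall hGnn)
      hG.aestronglyMeasurable
  linarith

lemma lint_one_add (ν : Measure α) [IsProbabilityMeasure ν] {c : ℝ} (hc : 0 ≤ c)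
    {h : α → ℝ} (hh : Measurable h) (hnn : ∀ y, 0 ≤ h y) :
    ∫⁻ y, ENNReal.ofReal (c * (1 + h y)) ∂ν =
      ENNReal.ofReal c * (1 + ∫⁻ y, ENNReal.ofReal (h y) ∂ν) := by
  have e1 : ∀ y, ENNReal.ofReal (c * (1 + h y)) =
      ENNReal.ofReal c * (1 + ENNReal.ofReal (h y)) := by
    intro y
    rw [ENNReal.ofReal_mul hc, ENNReal.ofReal_add zero_le_one (hnn y), ENNReal.ofReal_one]
  simp_rw [e1]
  rw [lintegral_const_mul _ (by exact (measurable_const.add hh.ennreal_ofReal)),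
    lintegral_add_left measurable_const]
  simp
end H2

section H3
variable {α : Type*} [MeasurableSpace α] [NormedAddCommGroup α] [OpensMeasurableSpace α]

lemma measurable_norm_rpow (r : ℝ) (hr : 0 ≤ r) :
    Measurable (fun y : α => ‖y‖ ^ r) :=
  ((Real.continuous_rpow_const hr).measurable).comp measurable_norm

lemma main_bound (ν μ' : Measure α) [IsProbabilityMeasure ν] [IsProbabilityMeasure μ']
    {β Cf : ℝ} (hβ : 0 ≤ β) (hCf : 1 ≤ Cf) {f : α → ℝ} (hf : Measurable f)
    (hfb : ∀ y, |f y| ≤ Cf * (1 + ‖y‖ ^ β)) (hfμ : ∫ y, f y ∂μ' = 0)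
    {R : ℝ} (hR : 1 ≤ R)
    {CP Cμ Ctv : ℝ} (hCP : 0 ≤ CP) (hCμ : 0 ≤ Cμ) (hCtv : 0 ≤ Ctv)
    (hmomP : ∫⁻ y, ENNReal.ofReal (‖y‖ ^ (β+3)) ∂ν ≤ ENNReal.ofReal CP)
    (hmomμ : ∫⁻ y, ENNReal.ofReal (‖y‖ ^ (β+3)) ∂μ' ≤ ENNReal.ofReal Cμ)
    (htv : tvNorm ν μ' ≤ Ctv * R ^ (-(β+3))) :
    |∫ y, f y ∂ν| ≤ 2 * Cf * (Ctv + CP + Cμ) * R ^ (-(2:ℝ)) := by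
  have hR0 : (0:ℝ) < R := lt_of_lt_of_le one_pos hR
  have hCf0 : (0:ℝ) ≤ Cf := by linarith
  have hβ3 : (0:ℝ) ≤ β + 3 := by linarith
  have hmrp := measurable_norm_rpow (α := α) (β+3) hβ3
  have hrpnn : ∀ y : α, 0 ≤ ‖y‖ ^ (β+3) := fun y => Real.rpow_nonneg (norm_nonneg y) _
  -- growth bound with exponent β+3
  have hfβ3 : ∀ y, |f y| ≤ 2*Cf*(1 + ‖y‖ ^ (β+3)) := by
    intro y
    have h1 := rpow_le_one_add_rpow (norm_nonneg y) hβ (by linarith : β ≤ β + 3)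
    have h2 := hfb y
    have h3 := hrpnn y
    nlinarith
  set G2 := fun y : α => 2*Cf*(1 + ‖y‖ ^ (β+3)) with hG2
  have hG2m : Measurable G2 := (measurable_const.add hmrp).const_mul _
  have hG2nn : ∀ y, 0 ≤ G2 y := fun y => by
    have := hrpnn y; rw [hG2]; positivity
  have hG2fin : ∀ (ρ : Measure α) [IsProbabilityMeasure ρ],
      (∫⁻ y, ENNReal.ofReal (‖y‖ ^ (β+3)) ∂ρ ≠ ⊤) →
      ∫⁻ y, ENNReal.ofReal (G2 y) ∂ρ ≠ ⊤ := by
    intro ρ _ hfin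
    rw [hG2, lint_one_add ρ (by linarith : (0:ℝ) ≤ 2*Cf) hmrp hrpnn]
    exact ENNReal.mul_ne_top ENNReal.ofReal_ne_top
      (ENNReal.add_ne_top.mpr ⟨ENNReal.one_ne_top, hfin⟩)
  have hmomPfin : ∫⁻ y, ENNReal.ofReal (‖y‖ ^ (β+3)) ∂ν ≠ ⊤ :=
    (lt_of_le_of_lt hmomP ENNReal.ofReal_lt_top).ne
  have hmomμfin : ∫⁻ y, ENNReal.ofReal (‖y‖ ^ (β+3)) ∂μ' ≠ ⊤ :=
    (lt_of_le_of_lt hmomμ ENNReal.ofReal_lt_top).ne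
  -- truncations
  have hsetR : MeasurableSet {y : α | ‖y‖ ≤ R} := measurableSet_le measurable_norm measurable_const
  set fR := fun y : α => if ‖y‖ ≤ R then f y else 0 with hfR
  set gR := fun y : α => if ‖y‖ ≤ R then 0 else f y with hgR
  have hfRm : Measurable fR := Measurable.ite hsetR hf measurable_const
  have hgRm : Measurable gR := Measurable.ite hsetR measurable_const hf
  have hfRb : ∀ y, |fR y| ≤ Cf*(1+R^β) := by
    intro y
    rw [hfR]
    by_cases hy : ‖y‖ ≤ R
    · simp only [hy, if_true]
      have h1 : ‖y‖ ^ β ≤ R ^ β := Real.rpow_le_rpow (norm_nonneg y) hy hβ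
      have := hfb y
      nlinarith
    · simp only [hy, if_false, abs_zero]
      have : (0:ℝ) ≤ R ^ β := Real.rpow_nonneg hR0.le β
      nlinarith
  set c := 2*Cf*R^(-(3:ℝ)) with hc
  have hcpos : 0 < R ^ (-(3:ℝ)) := Real.rpow_pos_of_pos hR0 _
  have hc0 : 0 ≤ c := by rw [hc]; positivity
  have hgRb : ∀ y, |gR y| ≤ c * ‖y‖ ^ (β+3) := by
    intro y
    rw [hgR]
    by_cases hy : ‖y‖ ≤ R
    · simp only [hy, if_true, abs_zero]
      exact mul_nonneg hc0 (hrpnn y)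
    · simp only [hy, if_false]
      push_neg at hy
      set a := ‖y‖ with ha
      have ha1 : (1:ℝ) ≤ a := le_trans hR hy.le
      have ha0 : (0:ℝ) < a := lt_of_lt_of_le one_pos ha1
      have h3 : R^(3:ℝ) ≤ a^(3:ℝ) := Real.rpow_le_rpow hR0.le hy.le (by norm_num)
      have hsplit : a^(β+3) = a^β * a^(3:ℝ) := Real.rpow_add ha0 β 3
      have hRneg : R^(-(3:ℝ)) = (R^(3:ℝ))⁻¹ := Real.rpow_neg hR0.le 3
      have hR3pos : (0:ℝ) < R^(3:ℝ) := Real.rpow_pos_of_pos hR0 _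
      have hinv : (R^(3:ℝ))⁻¹ * R^(3:ℝ) = 1 := inv_mul_cancel₀ hR3pos.ne'
      have h1 : |f y| ≤ 2 * Cf * a ^ β := by
        have h2 := hfb y
        have h4 : (1:ℝ) ≤ a ^ β := by
          calc (1:ℝ) = 1 ^ β := (Real.one_rpow β).symm
          _ ≤ a ^ β := Real.rpow_le_rpow zero_le_one ha1 hβ
        nlinarith [mul_nonneg hCf0 (sub_nonneg.mpr h4)]
      have h5 : a ^ β ≤ R^(-(3:ℝ)) * a ^ (β+3) := by
        rw [hsplit, hRneg]
        have haβ : (0:ℝ) ≤ a ^ β := Real.rpow_nonneg ha0.le β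
        have hinv0 : (0:ℝ) ≤ (R^(3:ℝ))⁻¹ := inv_nonneg.mpr hR3pos.le
        nlinarith [mul_le_mul_of_nonneg_left h3 (mul_nonneg hinv0 haβ)]
      calc |f y| ≤ 2 * Cf * a ^ β := h1
        _ ≤ 2 * Cf * (R^(-(3:ℝ)) * a ^ (β+3)) := by
            have : (0:ℝ) ≤ 2 * Cf := by linarith
            exact mul_le_mul_of_nonneg_left h5 this
        _ = c * a ^ (β+3) := by rw [hc]; ring
  -- integrability and tail bounds
  have lint_cmul : ∀ (ρ : Measure α), ∫⁻ y, ENNReal.ofReal (c * ‖y‖ ^ (β+3)) ∂ρ =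
      ENNReal.ofReal c * ∫⁻ y, ENNReal.ofReal (‖y‖ ^ (β+3)) ∂ρ := by
    intro ρ
    simp_rw [ENNReal.ofReal_mul hc0]
    rw [lintegral_const_mul _ hmrp.ennreal_ofReal]
  have htail : ∀ (ρ : Measure α) [IsProbabilityMeasure ρ], ∀ {CM : ℝ}, 0 ≤ CM →
      (∫⁻ y, ENNReal.ofReal (‖y‖ ^ (β+3)) ∂ρ ≤ ENNReal.ofReal CM) →
      Integrable gR ρ ∧ |∫ y, gR y ∂ρ| ≤ c * CM := by
    intro ρ _ CM hCM hmom
    have hfin : ∫⁻ y, ENNReal.ofReal (c * ‖y‖ ^ (β+3)) ∂ρ ≠ ⊤ := by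
      rw [lint_cmul ρ]
      exact ENNReal.mul_ne_top ENNReal.ofReal_ne_top (lt_of_le_of_lt hmom ENNReal.ofReal_lt_top).ne
    obtain ⟨hint, hbd⟩ := integrable_of_abs_le ρ hgRm
      ((hmrp.const_mul c)) (fun y => mul_nonneg hc0 (hrpnn y)) hgRb hfin
    refine ⟨hint, le_trans hbd ?_⟩
    rw [lint_cmul ρ, ENNReal.toReal_mul, ENNReal.toReal_ofReal hc0]
    refine mul_le_mul_of_nonneg_left ?_ hc0
    calc (∫⁻ y, ENNReal.ofReal (‖y‖ ^ (β+3)) ∂ρ).toReal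
        ≤ (ENNReal.ofReal CM).toReal := ENNReal.toReal_mono ENNReal.ofReal_ne_top hmom
      _ = CM := ENNReal.toReal_ofReal hCM
  obtain ⟨hIgν, hBgν⟩ := htail ν hCP hmomP
  obtain ⟨hIgμ, hBgμ⟩ := htail μ' hCμ hmomμ
  have hIf : ∀ (ρ : Measure α) [IsProbabilityMeasure ρ],
      (∫⁻ y, ENNReal.ofReal (‖y‖ ^ (β+3)) ∂ρ ≠ ⊤) → Integrable f ρ ∧ Integrable fR ρ := by
    intro ρ _ hfin
    have h1 := integrable_of_abs_le ρ hf hG2m hG2nn hfβ3 (hG2fin ρ hfin)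
    have hfRb3 : ∀ y, |fR y| ≤ G2 y := by
      intro y
      rw [hfR]
      by_cases hy : ‖y‖ ≤ R
      · simp only [hy, if_true]; exact hfβ3 y
      · simp only [hy, if_false, abs_zero]; exact hG2nn y
    have h2 := integrable_of_abs_le ρ hfRm hG2m hG2nn hfRb3 (hG2fin ρ hfin)
    exact ⟨h1.1, h2.1⟩
  obtain ⟨hIfν, hIfRν⟩ := hIf ν hmomPfin
  obtain ⟨hIfμ, hIfRμ⟩ := hIf μ' hmomμfin
  -- decomposition
  have hsum : ∀ y, f y = fR y + gR y := by
    intro y; rw [hfR, hgR]; by_cases hy : ‖y‖ ≤ R <;> simp [hy]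
  have hdec : ∀ (ρ : Measure α), Integrable fR ρ → Integrable gR ρ →
      ∫ y, f y ∂ρ = ∫ y, fR y ∂ρ + ∫ y, gR y ∂ρ := by
    intro ρ h1 h2
    rw [← integral_add h1 h2]
    exact integral_congr_ae (Filter.Eventually.of_forall hsum)
  have hdecν := hdec ν hIfRν hIgν
  have hdecμ := hdec μ' hIfRμ hIgμ
  -- TV bound
  have hTV := abs_integral_sub_le_tvNorm ν μ' hfRm hfRb
  have htvnn := tvNorm_nonneg ν μ'
  -- numeric assembly
  have hRβ : (0:ℝ) < R ^ β := Real.rpow_pos_of_pos hR0 β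
  have h1Rβ : (1:ℝ) ≤ R ^ β := by
    calc (1:ℝ) = 1 ^ β := (Real.one_rpow β).symm
    _ ≤ R ^ β := Real.rpow_le_rpow zero_le_one hR hβ
  have hMnn : 0 ≤ Cf*(1+R^β) := by nlinarith
  have hT1 : |∫ y, fR y ∂ν - ∫ y, fR y ∂μ'| ≤ 2 * Cf * Ctv * R ^ (-(3:ℝ)) := by
    have step1 : Cf*(1+R^β) * tvNorm ν μ' ≤ Cf*(1+R^β) * (Ctv * R ^ (-(β+3))) :=
      mul_le_mul_of_nonneg_left htv hMnn
    have hRe : R ^ β * R ^ (-(β+3)) = R ^ (-(3:ℝ)) := by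
      rw [← Real.rpow_add hR0]
      norm_num
    have hRneg2 : (0:ℝ) < R ^ (-(β+3)) := Real.rpow_pos_of_pos hR0 _
    calc |∫ y, fR y ∂ν - ∫ y, fR y ∂μ'| ≤ Cf*(1+R^β) * tvNorm ν μ' := hTV
      _ ≤ Cf*(1+R^β) * (Ctv * R ^ (-(β+3))) := step1
      _ ≤ Cf*(2*R^β) * (Ctv * R ^ (-(β+3))) := by
          nlinarith [mul_nonneg (mul_nonneg hCf0 (sub_nonneg.mpr h1Rβ))
            (mul_nonneg hCtv hRneg2.le), mul_nonneg hCtv hRneg2.le]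
      _ = 2*Cf*Ctv * (R ^ β * R ^ (-(β+3))) := by ring
      _ = 2*Cf*Ctv * R ^ (-(3:ℝ)) := by rw [hRe]
  have hfull : ∫ y, f y ∂ν = (∫ y, fR y ∂ν - ∫ y, fR y ∂μ') + ∫ y, gR y ∂ν - ∫ y, gR y ∂μ' := by
    rw [hdecν]
    have : ∫ y, fR y ∂μ' + ∫ y, gR y ∂μ' = 0 := by rw [← hdecμ]; exact hfμ
    linarith
  have hR32 : R ^ (-(3:ℝ)) ≤ R ^ (-(2:ℝ)) :=
    Real.rpow_le_rpow_of_exponent_le hR (by norm_num)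
  have habs : |∫ y, f y ∂ν| ≤ 2*Cf*Ctv * R ^ (-(3:ℝ)) + c * CP + c * Cμ := by
    rw [hfull]
    have t1 := abs_add_le (∫ y, fR y ∂ν - ∫ y, fR y ∂μ' + ∫ y, gR y ∂ν) (- ∫ y, gR y ∂μ')
    have t2 := abs_add_le (∫ y, fR y ∂ν - ∫ y, fR y ∂μ') (∫ y, gR y ∂ν)
    rw [abs_neg] at t1
    have : ∫ y, fR y ∂ν - ∫ y, fR y ∂μ' + ∫ y, gR y ∂ν - ∫ y, gR y ∂μ'
        = (∫ y, fR y ∂ν - ∫ y, fR y ∂μ' + ∫ y, gR y ∂ν) + (- ∫ y, gR y ∂μ') := by ring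
    rw [this]
    calc |(∫ y, fR y ∂ν - ∫ y, fR y ∂μ' + ∫ y, gR y ∂ν) + (- ∫ y, gR y ∂μ')|
        ≤ |∫ y, fR y ∂ν - ∫ y, fR y ∂μ' + ∫ y, gR y ∂ν| + |∫ y, gR y ∂μ'| := t1
      _ ≤ |∫ y, fR y ∂ν - ∫ y, fR y ∂μ'| + |∫ y, gR y ∂ν| + |∫ y, gR y ∂μ'| := by linarith
      _ ≤ 2*Cf*Ctv * R ^ (-(3:ℝ)) + c * CP + c * Cμ := by linarith
  calc |∫ y, f y ∂ν| ≤ 2*Cf*Ctv * R ^ (-(3:ℝ)) + c * CP + c * Cμ := habs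
    _ = 2*Cf*(Ctv + CP + Cμ) * R ^ (-(3:ℝ)) := by rw [hc]; ring
    _ ≤ 2*Cf*(Ctv + CP + Cμ) * R ^ (-(2:ℝ)) := by
        have : (0:ℝ) ≤ 2*Cf*(Ctv + CP + Cμ) := by nlinarith
        exact mul_le_mul_of_nonneg_left hR32 this
end H3

/-- the function `u(x) = ∫_0^∞ (∫ f dμ_t^x) dt` is `μ`-integrable and
`∫ u dμ = 0`: the solution of the Poisson equation is centered with respect to the
invariant measure `μ`. -/
theorem stmt4
    (d : ℕ) (hd : 1 ≤ d)
    (P : ℝ → EuclideanSpace ℝ (Fin d) → Measure (EuclideanSpace ℝ (Fin d)))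
    (μ : Measure (EuclideanSpace ℝ (Fin d)))
    (hP : ∀ t x, 0 ≤ t → IsProbabilityMeasure (P t x))
    (hμ : IsProbabilityMeasure μ)
    (hmeas : ∀ E : Set (EuclideanSpace ℝ (Fin d)), MeasurableSet E →
      Measurable (fun p : ℝ × EuclideanSpace ℝ (Fin d) => P p.1 p.2 E))
    (hinv : ∀ t : ℝ, 0 ≤ t → ∀ E : Set (EuclideanSpace ℝ (Fin d)), MeasurableSet E →
      ∫⁻ x, P t x E ∂μ = μ E)
    (hP1 : ∀ m m' : ℝ, 0 < m → m + 2 < m' → ∃ C : ℝ, ∀ t x, 0 ≤ t →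
      ∫⁻ y, ENNReal.ofReal (‖y‖ ^ m) ∂(P t x) ≤ ENNReal.ofReal (C * (1 + ‖x‖ ^ m')))
    (hP2 : ∀ m : ℝ, 0 < m → ∫⁻ y, ENNReal.ofReal (‖y‖ ^ m) ∂μ < ⊤)
    (hP3 : ∀ k m : ℝ, 0 < k → 2 * k + 2 < m → ∃ C : ℝ, ∀ t x, 0 ≤ t →
      tvNorm (P t x) μ ≤ C * (1 + ‖x‖ ^ m) * (1 + t) ^ (-(k + 1)))
    (β Cf : ℝ) (hβ : 0 ≤ β) (hCf : 1 ≤ Cf)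
    (f : EuclideanSpace ℝ (Fin d) → ℝ) (hf : Measurable f)
    (hfb : ∀ y, |f y| ≤ Cf * (1 + ‖y‖ ^ β))
    (hfμ : ∫ y, f y ∂μ = 0) :
    Integrable (fun x => ∫ t in Ioi (0 : ℝ), ∫ y, f y ∂(P t x)) μ ∧
    (∫ x, (∫ t in Ioi (0 : ℝ), ∫ y, f y ∂(P t x)) ∂μ) = 0 := by
  haveI := hμ
  have hCf0 : (0:ℝ) ≤ Cf := by linarith
  -- constants
  obtain ⟨C₁, hC₁⟩ := hP1 (β+3) (β+6) (by linarith) (by linarith)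
  set C₁' := max C₁ 0 with hC₁'def
  have hC₁'0 : 0 ≤ C₁' := le_max_right _ _
  have hC₁' : ∀ t x, 0 ≤ t → ∫⁻ y, ENNReal.ofReal (‖y‖ ^ (β+3)) ∂(P t x) ≤
      ENNReal.ofReal (C₁' * (1 + ‖x‖ ^ (β+6))) := by
    intro t x ht
    refine le_trans (hC₁ t x ht) (ENNReal.ofReal_le_ofReal ?_)
    have h1 : (0:ℝ) ≤ 1 + ‖x‖ ^ (β+6) := by
      have := Real.rpow_nonneg (norm_nonneg x) (β+6); linarith
    exact mul_le_mul_of_nonneg_right (le_max_left _ _) h1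
  obtain ⟨C₃, hC₃⟩ := hP3 (β+2) (2*β+7) (by linarith) (by linarith)
  set C₃' := max C₃ 0 with hC₃'def
  have hC₃'0 : 0 ≤ C₃' := le_max_right _ _
  set Mμ3 := (∫⁻ y, ENNReal.ofReal (‖y‖ ^ (β+3)) ∂μ).toReal with hMμ3def
  have hMμ30 : 0 ≤ Mμ3 := ENNReal.toReal_nonneg
  have hμ3fin : ∫⁻ y, ENNReal.ofReal (‖y‖ ^ (β+3)) ∂μ ≠ ⊤ := (hP2 (β+3) (by linarith)).ne
  have hMμ3 : ∫⁻ y, ENNReal.ofReal (‖y‖ ^ (β+3)) ∂μ ≤ ENNReal.ofReal Mμ3 :=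
    le_of_eq (ENNReal.ofReal_toReal hμ3fin).symm
  -- main pointwise bound
  set K := 2 * Cf * (C₃' + 2*C₁' + Mμ3) with hKdef
  have hK0 : 0 ≤ K := by positivity
  set ψ := fun x : EuclideanSpace ℝ (Fin d) => K * (1 + ‖x‖ ^ (2*β+7)) with hψdef
  set φ := fun t : ℝ => (1+t) ^ (-(2:ℝ)) with hφdef
  have hψnn : ∀ x, 0 ≤ ψ x := by
    intro x
    have := Real.rpow_nonneg (norm_nonneg x) (2*β+7)
    rw [hψdef]; positivity
  have hφnn : ∀ t : ℝ, 0 ≤ t → 0 ≤ φ t := fun t ht => by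
    rw [hφdef]; positivity
  have hmain : ∀ t x, 0 ≤ t → |∫ y, f y ∂(P t x)| ≤ ψ x * φ t := by
    intro t x ht
    haveI := hP t x ht
    have hX : (0:ℝ) ≤ ‖x‖ ^ (2*β+7) := Real.rpow_nonneg (norm_nonneg x) _
    have hR1 : (1:ℝ) ≤ 1 + t := by linarith
    have hCP0 : 0 ≤ C₁' * (1 + ‖x‖ ^ (β+6)) := by
      have := Real.rpow_nonneg (norm_nonneg x) (β+6); positivity
    have hCtv0 : 0 ≤ C₃' * (1 + ‖x‖ ^ (2*β+7)) := by positivity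
    have htv : tvNorm (P t x) μ ≤ (C₃' * (1 + ‖x‖ ^ (2*β+7))) * (1+t) ^ (-(β+3)) := by
      have h0 := hC₃ t x ht
      have he : (β+2+1) = β+3 := by ring
      rw [he] at h0
      refine le_trans h0 ?_
      have hpw : (0:ℝ) ≤ (1+t) ^ (-(β+3)) := Real.rpow_nonneg (by linarith) _
      have : C₃ * (1 + ‖x‖ ^ (2*β+7)) ≤ C₃' * (1 + ‖x‖ ^ (2*β+7)) :=
        mul_le_mul_of_nonneg_right (le_max_left _ _) (by linarith)
      nlinarith
    have hb := main_bound (P t x) μ hβ hCf hf hfb hfμ hR1 hCP0 hMμ30 hCtv0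
      (hC₁' t x ht) hMμ3 htv
    refine le_trans hb ?_
    rw [hψdef, hφdef, hKdef]
    have h68 : ‖x‖ ^ (β+6) ≤ 1 + ‖x‖ ^ (2*β+7) :=
      rpow_le_one_add_rpow (norm_nonneg x) (by linarith) (by linarith)
    have hφt : (0:ℝ) ≤ (1+t) ^ (-(2:ℝ)) := Real.rpow_nonneg (by linarith) _
    have hcomb : C₃' * (1 + ‖x‖ ^ (2*β+7)) + C₁' * (1 + ‖x‖ ^ (β+6)) + Mμ3
        ≤ (C₃' + 2*C₁' + Mμ3) * (1 + ‖x‖ ^ (2*β+7)) := by nlinarith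
    have h2Cf : (0:ℝ) ≤ 2 * Cf := by linarith
    calc 2 * Cf * (C₃' * (1 + ‖x‖ ^ (2*β+7)) + C₁' * (1 + ‖x‖ ^ (β+6)) + Mμ3) * (1+t) ^ (-(2:ℝ))
        ≤ 2 * Cf * ((C₃' + 2*C₁' + Mμ3) * (1 + ‖x‖ ^ (2*β+7))) * (1+t) ^ (-(2:ℝ)) := by
          refine mul_le_mul_of_nonneg_right (mul_le_mul_of_nonneg_left hcomb h2Cf) hφt
      _ = 2 * Cf * (C₃' + 2*C₁' + Mμ3) * (1 + ‖x‖ ^ (2*β+7)) * (1+t) ^ (-(2:ℝ)) := by ring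
  -- measurability of the kernel integral
  have hPmeas : Measurable (fun p : ℝ × EuclideanSpace ℝ (Fin d) => P p.1 p.2) :=
    Measure.measurable_of_measurable_coe _ (fun s hs => hmeas s hs)
  set G := fun p : ℝ × EuclideanSpace ℝ (Fin d) =>
    (∫⁻ y, ENNReal.ofReal (f y) ∂(P p.1 p.2)).toReal -
    (∫⁻ y, ENNReal.ofReal (-(f y)) ∂(P p.1 p.2)).toReal with hGdef
  have hGm : Measurable G := by
    refine Measurable.sub ?_ ?_
    · exact ((Measure.measurable_lintegral hf.ennreal_ofReal).comp hPmeas).ennreal_toReal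
    · exact ((Measure.measurable_lintegral hf.neg.ennreal_ofReal).comp hPmeas).ennreal_toReal
  -- integrability of f wrt the kernels and μ
  have hmrp : Measurable (fun y : EuclideanSpace ℝ (Fin d) => ‖y‖ ^ (β+3)) :=
    measurable_norm.pow measurable_const
  have hrpnn : ∀ y : EuclideanSpace ℝ (Fin d), 0 ≤ ‖y‖ ^ (β+3) :=
    fun y => Real.rpow_nonneg (norm_nonneg y) _
  have hfβ3 : ∀ y, |f y| ≤ 2*Cf*(1 + ‖y‖ ^ (β+3)) := by
    intro y
    have h1 := rpow_le_one_add_rpow (norm_nonneg y) hβ (by linarith : β ≤ β + 3)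
    have h2 := hfb y
    have h3 := hrpnn y
    nlinarith
  have hG2m : Measurable (fun y : EuclideanSpace ℝ (Fin d) => 2*Cf*(1 + ‖y‖ ^ (β+3))) :=
    (measurable_const.add hmrp).const_mul _
  have hG2nn : ∀ y : EuclideanSpace ℝ (Fin d), 0 ≤ 2*Cf*(1 + ‖y‖ ^ (β+3)) := fun y => by
    have := hrpnn y; positivity
  have hintf : ∀ (ρ : Measure (EuclideanSpace ℝ (Fin d))) [IsProbabilityMeasure ρ],
      (∫⁻ y, ENNReal.ofReal (‖y‖ ^ (β+3)) ∂ρ ≠ ⊤) → Integrable f ρ := by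
    intro ρ _ hfin
    have hfin2 : ∫⁻ y, ENNReal.ofReal (2*Cf*(1 + ‖y‖ ^ (β+3))) ∂ρ ≠ ⊤ := by
      rw [lint_one_add ρ (by linarith : (0:ℝ) ≤ 2*Cf) hmrp hrpnn]
      exact ENNReal.mul_ne_top ENNReal.ofReal_ne_top
        (ENNReal.add_ne_top.mpr ⟨ENNReal.one_ne_top, hfin⟩)
    exact (integrable_of_abs_le ρ hf hG2m hG2nn hfβ3 hfin2).1
  have hfintμ : Integrable f μ := hintf μ hμ3fin
  have hfintP : ∀ t x, 0 ≤ t → Integrable f (P t x) := by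
    intro t x ht
    haveI := hP t x ht
    exact hintf (P t x) (lt_of_le_of_lt (hC₁' t x ht) ENNReal.ofReal_lt_top).ne
  have hGeq : ∀ t x, 0 ≤ t → G (t, x) = ∫ y, f y ∂(P t x) := by
    intro t x ht
    exact (integral_eq_lintegral_pos_part_sub_lintegral_neg_part (hfintP t x ht)).symm
  -- integrability of φ on Ioi 0
  have hφint : IntegrableOn φ (Ioi (0:ℝ)) volume := by
    have base : IntegrableOn (fun s : ℝ => s ^ (-(2:ℝ))) (Ioi 1) volume :=
      integrableOn_Ioi_rpow_of_lt (by norm_num) one_pos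
    have hmap : volume.restrict (Ioi (1:ℝ)) =
        Measure.map (fun t : ℝ => t + 1) (volume.restrict (Ioi 0)) := by
      conv_lhs => rw [← map_add_right_eq_self volume (1:ℝ)]
      rw [Measure.restrict_map (measurable_add_const 1) measurableSet_Ioi]
      congr 1
      ext t
      simp [mem_Ioi]
    rw [IntegrableOn, hmap] at base
    have hgm : Measurable (fun s : ℝ => s ^ (-(2:ℝ))) := measurable_id.pow measurable_const
    rw [integrable_map_measure hgm.aestronglyMeasurable
      (measurable_add_const 1).aemeasurable] at base
    refine base.congr (Filter.Eventually.of_forall fun t => ?_)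
    simp only [Function.comp_apply, hφdef]
    rw [add_comm]
  have hIφnn : 0 ≤ ∫ t in Ioi (0:ℝ), φ t :=
    setIntegral_nonneg measurableSet_Ioi (fun t ht => hφnn t (le_of_lt ht))
  set Iφ := ∫ t in Ioi (0:ℝ), φ t with hIφdef
  -- integrability of ψ wrt μ
  have hψint : Integrable ψ μ := by
    have h27 : (0:ℝ) < 2*β+7 := by linarith
    have hm27 : Measurable (fun x : EuclideanSpace ℝ (Fin d) => ‖x‖ ^ (2*β+7)) :=
      measurable_norm.pow measurable_const
    have h1 : Integrable (fun x : EuclideanSpace ℝ (Fin d) => ‖x‖ ^ (2*β+7)) μ := by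
      have := integrable_toReal_of_lintegral_ne_top
        (hm27.ennreal_ofReal).aemeasurable (hP2 (2*β+7) h27).ne
      refine this.congr (Filter.Eventually.of_forall fun y => ?_)
      exact ENNReal.toReal_ofReal (Real.rpow_nonneg (norm_nonneg y) _)
    have h2 : Integrable (fun x : EuclideanSpace ℝ (Fin d) => 1 + ‖x‖ ^ (2*β+7)) μ :=
      (integrable_const 1).add h1
    exact (h2.const_mul K).congr (Filter.Eventually.of_forall fun x => by rw [hψdef])
  -- per-x integrability of G on Ioi 0
  have hGxm : ∀ x, Measurable (fun t => G (t, x)) := fun x =>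
    hGm.comp (measurable_id.prodMk measurable_const)
  have hGbound : ∀ x, ∀ t ∈ Ioi (0:ℝ), ‖G (t, x)‖ ≤ ψ x * φ t := by
    intro x t ht
    rw [Real.norm_eq_abs, hGeq t x (le_of_lt ht)]
    exact hmain t x (le_of_lt ht)
  have hGint : ∀ x, IntegrableOn (fun t => G (t, x)) (Ioi (0:ℝ)) volume := by
    intro x
    refine Integrable.mono' (hφint.const_mul (ψ x)) (hGxm x).aestronglyMeasurable ?_
    filter_upwards [ae_restrict_mem measurableSet_Ioi] with t ht
    exact hGbound x t ht
  have hub : ∀ x, |∫ t in Ioi (0:ℝ), G (t, x)| ≤ ψ x * Iφ := by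
    intro x
    have h1 : |∫ t in Ioi (0:ℝ), G (t, x)| ≤ ∫ t in Ioi (0:ℝ), ‖G (t, x)‖ := by
      simpa [Real.norm_eq_abs] using
        norm_integral_le_integral_norm (μ := volume.restrict (Ioi (0:ℝ))) (fun t => G (t, x))
    have h2 : ∫ t in Ioi (0:ℝ), ‖G (t, x)‖ ≤ ∫ t in Ioi (0:ℝ), ψ x * φ t := by
      refine integral_mono_ae (hGint x).norm (hφint.const_mul (ψ x)) ?_
      filter_upwards [ae_restrict_mem measurableSet_Ioi] with t ht
      exact hGbound x t ht
    rw [integral_const_mul] at h2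
    rw [hIφdef]
    linarith
  -- rewrite u in terms of G
  have hueq : (fun x => ∫ t in Ioi (0:ℝ), ∫ y, f y ∂(P t x)) =
      fun x => ∫ t in Ioi (0:ℝ), G (t, x) := by
    funext x
    refine setIntegral_congr_fun measurableSet_Ioi (fun t ht => ?_)
    exact (hGeq t x (le_of_lt ht)).symm
  have humeas : AEStronglyMeasurable (fun x => ∫ t in Ioi (0:ℝ), G (t, x)) μ := by
    have : StronglyMeasurable (fun z : EuclideanSpace ℝ (Fin d) × ℝ => G (z.2, z.1)) :=
      (hGm.comp measurable_swap).stronglyMeasurable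
    exact this.integral_prod_right'.aestronglyMeasurable
  have huint : Integrable (fun x => ∫ t in Ioi (0:ℝ), G (t, x)) μ := by
    refine Integrable.mono' (hψint.mul_const Iφ) humeas ?_
    filter_upwards with x
    rw [Real.norm_eq_abs]
    exact hub x
  constructor
  · rw [hueq]; exact huint
  -- second part: the integral vanishes
  rw [hueq]
  set ν := volume.restrict (Ioi (0:ℝ)) with hνdef
  -- a.e. on the product, the second coordinate is positive
  have hz2 : ∀ᵐ z ∂(μ.prod ν), z.2 ∈ Ioi (0:ℝ) := by
    rw [ae_iff]
    refine measure_mono_null (t := univ ×ˢ (Ioi (0:ℝ))ᶜ) (fun z hz => mem_prod.mpr ⟨mem_univ _, hz⟩) ?_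
    rw [Measure.prod_prod]
    have : ν (Ioi (0:ℝ))ᶜ = 0 := by
      rw [hνdef, Measure.restrict_apply measurableSet_Ioi.compl, compl_inter_self]
      exact measure_empty
    rw [this, mul_zero]
  have hprodint : Integrable (Function.uncurry fun x t => G (t, x)) (μ.prod ν) := by
    have hbd : Integrable (fun z : EuclideanSpace ℝ (Fin d) × ℝ => ψ z.1 * φ z.2) (μ.prod ν) :=
      hψint.mul_prod hφint
    refine Integrable.mono' hbd ((hGm.comp measurable_swap).aestronglyMeasurable) ?_
    filter_upwards [hz2] with z hz
    exact hGbound z.1 z.2 hz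
  have hswap := integral_integral_swap hprodint
  rw [hswap]
  have hinner : ∀ t ∈ Ioi (0:ℝ), ∫ x, G (t, x) ∂μ = 0 := by
    intro t ht'
    have ht : (0:ℝ) ≤ t := le_of_lt ht'
    set m := fun x : EuclideanSpace ℝ (Fin d) => P t x with hmdef
    have hm : Measurable m := hPmeas.comp (measurable_const.prodMk measurable_id)
    have hbind : μ.bind m = μ := by
      refine Measure.ext fun s hs => ?_
      rw [Measure.bind_apply hs hm.aemeasurable]
      exact hinv t ht s hs
    have hlin : ∀ (g : EuclideanSpace ℝ (Fin d) → ENNReal), Measurable g →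
        ∫⁻ x, (∫⁻ y, g y ∂(P t x)) ∂μ = ∫⁻ y, g y ∂μ := by
      intro g hg
      have h1 := Measure.lintegral_bind (m := μ) hm.aemeasurable hg.aemeasurable
      rw [hbind] at h1
      exact h1.symm
    have hApos := hlin (fun y => ENNReal.ofReal (f y)) hf.ennreal_ofReal
    have hAneg := hlin (fun y => ENNReal.ofReal (-(f y))) hf.neg.ennreal_ofReal
    have hAne : ∫⁻ y, ENNReal.ofReal (f y) ∂μ ≠ ⊤ := hfintμ.lintegral_lt_top.ne
    have hBne : ∫⁻ y, ENNReal.ofReal (-(f y)) ∂μ ≠ ⊤ := hfintμ.neg.lintegral_lt_top.ne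
    have hAmeas : Measurable (fun x => ∫⁻ y, ENNReal.ofReal (f y) ∂(P t x)) :=
      (Measure.measurable_lintegral hf.ennreal_ofReal).comp hm
    have hBmeas : Measurable (fun x => ∫⁻ y, ENNReal.ofReal (-(f y)) ∂(P t x)) :=
      (Measure.measurable_lintegral hf.neg.ennreal_ofReal).comp hm
    have intA : Integrable (fun x => (∫⁻ y, ENNReal.ofReal (f y) ∂(P t x)).toReal) μ :=
      integrable_toReal_of_lintegral_ne_top hAmeas.aemeasurable (by rw [hApos]; exact hAne)
    have intB : Integrable (fun x => (∫⁻ y, ENNReal.ofReal (-(f y)) ∂(P t x)).toReal) μ :=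
      integrable_toReal_of_lintegral_ne_top hBmeas.aemeasurable (by rw [hAneg]; exact hBne)
    have hAval : ∫ x, (∫⁻ y, ENNReal.ofReal (f y) ∂(P t x)).toReal ∂μ =
        (∫⁻ y, ENNReal.ofReal (f y) ∂μ).toReal := by
      rw [integral_toReal hAmeas.aemeasurable (ae_lt_top hAmeas (by rw [hApos]; exact hAne)),
        hApos]
    have hBval : ∫ x, (∫⁻ y, ENNReal.ofReal (-(f y)) ∂(P t x)).toReal ∂μ =
        (∫⁻ y, ENNReal.ofReal (-(f y)) ∂μ).toReal := by
      rw [integral_toReal hBmeas.aemeasurable (ae_lt_top hBmeas (by rw [hAneg]; exact hBne)),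
        hAneg]
    calc ∫ x, G (t, x) ∂μ
        = ∫ x, ((∫⁻ y, ENNReal.ofReal (f y) ∂(P t x)).toReal -
            (∫⁻ y, ENNReal.ofReal (-(f y)) ∂(P t x)).toReal) ∂μ := rfl
      _ = (∫ x, (∫⁻ y, ENNReal.ofReal (f y) ∂(P t x)).toReal ∂μ) -
            ∫ x, (∫⁻ y, ENNReal.ofReal (-(f y)) ∂(P t x)).toReal ∂μ := integral_sub intA intB
      _ = (∫⁻ y, ENNReal.ofReal (f y) ∂μ).toReal -
            (∫⁻ y, ENNReal.ofReal (-(f y)) ∂μ).toReal := by rw [hAval, hBval]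
      _ = ∫ y, f y ∂μ := (integral_eq_lintegral_pos_part_sub_lintegral_neg_part hfintμ).symm
      _ = 0 := hfμ
  calc ∫ t in Ioi (0:ℝ), ∫ x, G (t, x) ∂μ
      = ∫ t in Ioi (0:ℝ), (0:ℝ) := setIntegral_congr_fun measurableSet_Ioi hinner
    _ = 0 := integral_zero _ _
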